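/- arXiv:1602.00223 — 4 statements merged into one kernel-verified Lean document; each statement's English description precedes it below -/
import Mathlib

section
/- Let 0 < α < 1, 0 < λ ≤ Λ, s, y ∈ ℝ^d with y ≠ 0, τ = sᵀy/‖y‖², λ‖s‖² ≤ sᵀy ≤ Λ‖s‖², 1/Λ ≤ τ ≤ 1/λ, and ‖s‖²/‖y‖² ≤ 1/λ². If sᵀy − ατ‖y‖² > 0, and u = (s − ατy)/√((s − ατy)ᵀy), then uᵀu ≤ Λ/(λ²(1−α)) − α(2−α)/((1−α)Λ). -/
open Matrix

/-- bound on uᵀu for u = (s − ατy)/√((s − ατy)ᵀy). -/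
theorem stmt7 {d : ℕ} (α lam Lam : ℝ) (hα0 : 0 < α) (hα1 : α < 1)
    (hlam : 0 < lam) (hlamLam : lam ≤ Lam)
    (s y : Fin d → ℝ) (hy : y ≠ 0) (τ : ℝ) (hτ : τ = (s ⬝ᵥ y) / (y ⬝ᵥ y))
    (hsy1 : lam * (s ⬝ᵥ s) ≤ s ⬝ᵥ y) (hsy2 : s ⬝ᵥ y ≤ Lam * (s ⬝ᵥ s))
    (hτ1 : 1 / Lam ≤ τ) (hτ2 : τ ≤ 1 / lam)
    (hss : (s ⬝ᵥ s) / (y ⬝ᵥ y) ≤ 1 / lam ^ 2)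
    (hpos : 0 < s ⬝ᵥ y - α * τ * (y ⬝ᵥ y))
    (u : Fin d → ℝ)
    (hu : u = (Real.sqrt ((s - (α * τ) • y) ⬝ᵥ y))⁻¹ • (s - (α * τ) • y)) :
    u ⬝ᵥ u ≤ Lam / (lam ^ 2 * (1 - α)) - α * (2 - α) / ((1 - α) * Lam) := by
  have hLam : 0 < Lam := lt_of_lt_of_le hlam hlamLam
  have hSnn : (0:ℝ) ≤ s ⬝ᵥ s := Fintype.sum_nonneg fun i => mul_self_nonneg (s i)
  have hY : 0 < y ⬝ᵥ y := by
    rcases lt_or_eq_of_le (Fintype.sum_nonneg fun i => mul_self_nonneg (y i) :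
        (0:ℝ) ≤ y ⬝ᵥ y) with h | h
    · exact h
    · exact absurd (dotProduct_self_eq_zero.1 h.symm) hy
  have hP : s ⬝ᵥ y = τ * (y ⬝ᵥ y) := by
    rw [hτ]; field_simp
  set S := s ⬝ᵥ s with hSdef
  set Y := y ⬝ᵥ y with hYdef
  have hτpos : 0 < τ := lt_of_lt_of_le (by positivity) hτ1
  have h1α : 0 < 1 - α := by linarith
  have h2α : 0 < 2 - α := by linarith
  have hD : (s - (α * τ) • y) ⬝ᵥ y = (1 - α) * τ * Y := by
    rw [sub_dotProduct, smul_dotProduct, hP, smul_eq_mul]; ring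
  have hDpos : (0:ℝ) < (1 - α) * τ * Y := by positivity
  have hN : (s - (α * τ) • y) ⬝ᵥ (s - (α * τ) • y)
      = S - α * (2 - α) * τ ^ 2 * Y := by
    simp only [sub_dotProduct, dotProduct_sub, smul_dotProduct, dotProduct_smul,
      smul_eq_mul, hP, dotProduct_comm y s]
    ring
  have hs2 : Real.sqrt ((1 - α) * τ * Y) * Real.sqrt ((1 - α) * τ * Y)
      = (1 - α) * τ * Y := Real.mul_self_sqrt hDpos.le
  have hsne : Real.sqrt ((1 - α) * τ * Y) ≠ 0 :=
    (Real.sqrt_pos.2 hDpos).ne'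
  have huu : u ⬝ᵥ u = (S - α * (2 - α) * τ ^ 2 * Y) / ((1 - α) * τ * Y) := by
    rw [hu, smul_dotProduct, dotProduct_smul, hN, hD, smul_eq_mul, smul_eq_mul,
      eq_div_iff hDpos.ne', ← hs2]
    field_simp
    rw [Real.sqrt_sq (Real.sqrt_nonneg _)]
  rw [huu]
  have hrhs : Lam / (lam ^ 2 * (1 - α)) - α * (2 - α) / ((1 - α) * Lam)
      = (Lam ^ 2 - α * (2 - α) * lam ^ 2) / (lam ^ 2 * (1 - α) * Lam) := by
    field_simp
  rw [hrhs, div_le_div_iff₀ hDpos (by positivity)]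
  have hSY : S * lam ^ 2 ≤ Y := by
    rw [div_le_div_iff₀ hY (by positivity)] at hss
    nlinarith
  have hτΛ : 1 ≤ τ * Lam := by
    rw [div_le_iff₀ hLam] at hτ1; linarith
  nlinarith [mul_nonneg h1α.le (mul_nonneg hLam.le (sub_nonneg.2 hSY)),
    mul_nonneg h1α.le (mul_nonneg hLam.le (mul_nonneg hY.le (sub_nonneg.2 hτΛ))),
    mul_nonneg h1α.le (mul_nonneg
      (by positivity : (0:ℝ) ≤ α * (2 - α) * lam ^ 2 * τ * Y) (sub_nonneg.2 hτΛ))]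
end

section
/- Suppose Q : ℝ^d → ℝ is convex and H is a symmetric positive definite matrix with γ·I ⪯ H ⪯ Γ·I where 0 < γ ≤ Γ. Define the scaled proximal mapping prox_Q^H(x) = argmin_y { Q(y) + ½‖y − x‖²_H } where ‖z‖²_H = zᵀHz. Then for all x, y ∈ ℝ^d, ‖prox_Q^H(x) − prox_Q^H(y)‖ ≤ (Γ/γ)·‖x − y‖. -/
open Matrix

/-- the scaled proximal mapping with γI ⪯ H ⪯ ΓI is
(Γ/γ)-Lipschitz in the Euclidean norm. -/
theorem stmt8 {d : ℕ} (Q : (Fin d → ℝ) → ℝ) (hQ : ConvexOn ℝ Set.univ Q)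
    (H : Matrix (Fin d) (Fin d) ℝ) (hsym : H.IsSymm) (hpd : H.PosDef)
    (γ Γ : ℝ) (hγ : 0 < γ) (hγΓ : γ ≤ Γ)
    (hlo : (H - γ • (1 : Matrix (Fin d) (Fin d) ℝ)).PosSemidef)
    (hhi : (Γ • (1 : Matrix (Fin d) (Fin d) ℝ) - H).PosSemidef)
    (prox : (Fin d → ℝ) → (Fin d → ℝ))
    (hprox : ∀ x z, Q (prox x) + (1 / 2) * ((prox x - x) ⬝ᵥ (H *ᵥ (prox x - x)))
        ≤ Q z + (1 / 2) * ((z - x) ⬝ᵥ (H *ᵥ (z - x))))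
    (x y : Fin d → ℝ) :
    Real.sqrt ((prox x - prox y) ⬝ᵥ (prox x - prox y)) ≤
      (Γ / γ) * Real.sqrt ((x - y) ⬝ᵥ (x - y)) := by
  set u := prox x with hu
  set v := prox y with hv
  set B : (Fin d → ℝ) → (Fin d → ℝ) → ℝ := fun a b => a ⬝ᵥ (H *ᵥ b) with hB
  have Bsymm : ∀ a b, B a b = B b a := by
    intro a b
    simp only [hB]
    rw [dotProduct_mulVec, ← Matrix.vecMul_transpose, hsym.eq, dotProduct_comm]
  have Badd : ∀ a b c, B (a + b) c = B a c + B b c := by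
    intro a b c; simp only [hB, add_dotProduct]
  have Badd' : ∀ a b c, B a (b + c) = B a b + B a c := by
    intro a b c; simp only [hB, Matrix.mulVec_add, dotProduct_add]
  have Bsub : ∀ a b c, B (a - b) c = B a c - B b c := by
    intro a b c; simp only [hB, sub_dotProduct]
  have Bsmul : ∀ (t : ℝ) a b, B (t • a) b = t * B a b := by
    intro t a b; simp only [hB, smul_dotProduct, smul_eq_mul]
  have Bsmul' : ∀ (t : ℝ) a b, B a (t • b) = t * B a b := by
    intro t a b; simp only [hB, Matrix.mulVec_smul, dotProduct_smul, smul_eq_mul]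
  have Bneg' : ∀ a b, B a (-b) = -B a b := by
    intro a b; simp only [hB, Matrix.mulVec_neg, dotProduct_neg]
  have expand : ∀ (a c : Fin d → ℝ) (t : ℝ),
      B (a + t • c) (a + t • c) = B a a + 2 * t * B a c + t ^ 2 * B c c := by
    intro a c t
    simp only [Badd, Badd', Bsmul, Bsmul']
    rw [Bsymm c a]; ring
  set w := u - v with hw
  set s := x - y with hs
  have hBww : 0 ≤ B w w := by simpa using hpd.posSemidef.dotProduct_mulVec_nonneg w
  -- key inequality: B w w ≤ B w s
  have key : B w w ≤ B w s := by
    refine le_of_forall_pos_le_add fun ε hε => ?_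
    set t := min 1 (ε / (B w w + 1)) with ht
    have ht0 : 0 < t := lt_min one_pos (div_pos hε (by linarith))
    have ht1 : t ≤ 1 := min_le_left _ _
    have htε : t * B w w ≤ ε := by
      have h2 : t ≤ ε / (B w w + 1) := min_le_right _ _
      have : t * B w w ≤ (ε / (B w w + 1)) * B w w :=
        mul_le_mul_of_nonneg_right h2 hBww
      refine this.trans ?_
      rw [div_mul_eq_mul_div, div_le_iff₀ (by linarith)]
      nlinarith [hε.le, hBww]
    have hz1 : u + t • (v - u) = (1 - t) • u + t • v := by module
    have hz2 : v + t • (u - v) = (1 - t) • v + t • u := by module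
    have conv1 : Q (u + t • (v - u)) ≤ (1 - t) * Q u + t * Q v := by
      have := hQ.2 (Set.mem_univ u) (Set.mem_univ v) (by linarith : (0:ℝ) ≤ 1 - t)
        ht0.le (by ring)
      rw [hz1]; simpa using this
    have conv2 : Q (v + t • (u - v)) ≤ (1 - t) * Q v + t * Q u := by
      have := hQ.2 (Set.mem_univ v) (Set.mem_univ u) (by linarith : (0:ℝ) ≤ 1 - t)
        ht0.le (by ring)
      rw [hz2]; simpa using this
    have h1 : Q u + (1/2) * B (u - x) (u - x)
        ≤ Q (u + t • (v - u)) + (1/2) * B (u + t • (v - u) - x) (u + t • (v - u) - x) :=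
      hprox x (u + t • (v - u))
    have h2 : Q v + (1/2) * B (v - y) (v - y)
        ≤ Q (v + t • (u - v)) + (1/2) * B (v + t • (u - v) - y) (v + t • (u - v) - y) :=
      hprox y (v + t • (u - v))
    have e1 : B (u + t • (v - u) - x) (u + t • (v - u) - x)
        = B (u - x) (u - x) + 2 * t * B (u - x) (v - u) + t ^ 2 * B w w := by
      rw [show u + t • (v - u) - x = (u - x) + t • (v - u) by module, expand,
        show v - u = -w by rw [hw]; abel, Bneg', Bneg', Bsymm (-w), Bneg']
      ring
    have e2 : B (v + t • (u - v) - y) (v + t • (u - v) - y)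
        = B (v - y) (v - y) + 2 * t * B (v - y) w + t ^ 2 * B w w := by
      rw [show v + t • (u - v) - y = (v - y) + t • w by rw [hw]; module, expand]
    have Bsum : B (u - x) (v - u) + B (v - y) w = B w s - B w w := by
      rw [show v - u = -w by rw [hw]; abel, Bneg']
      have hid : (v - y) - (u - x) = s - w := by rw [hw, hs]; abel
      have h2 := Bsub (v - y) (u - x) w
      rw [hid, Bsub, Bsymm s w] at h2
      linarith
    rw [e1] at h1
    rw [e2] at h2
    have hmain : 0 ≤ t * (B w s - B w w + t * B w w) := by nlinarith [h1, h2, conv1, conv2, Bsum]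
    have hX : 0 ≤ B w s - B w w + t * B w w :=
      le_of_mul_le_mul_left (by rw [mul_zero]; exact hmain) ht0
    linarith
  -- Cauchy trick: B w w ≤ B s s
  have hws : 0 ≤ B (w - s) (w - s) := by simpa only [star_trivial] using hpd.posSemidef.dotProduct_mulVec_nonneg (w - s)
  have hexp : B (w - s) (w - s) = B w w - 2 * B w s + B s s := by
    rw [show w - s = w + (-1 : ℝ) • s by module, expand]; ring
  have hBwBs : B w w ≤ B s s := by rw [hexp] at hws; linarith
  -- eigenvalue bounds
  have hlo' : γ * (w ⬝ᵥ w) ≤ B w w := by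
    have := hlo.dotProduct_mulVec_nonneg w
    simp only [star_trivial, Matrix.sub_mulVec, dotProduct_sub, Matrix.smul_mulVec,
      Matrix.one_mulVec, dotProduct_smul, smul_eq_mul] at this
    simp only [hB]; linarith
  have hhi' : B s s ≤ Γ * (s ⬝ᵥ s) := by
    have := hhi.dotProduct_mulVec_nonneg s
    simp only [star_trivial, Matrix.sub_mulVec, dotProduct_sub, Matrix.smul_mulVec,
      Matrix.one_mulVec, dotProduct_smul, smul_eq_mul] at this
    simp only [hB]; linarith
  have hWnn : 0 ≤ w ⬝ᵥ w := Finset.sum_nonneg fun i _ => mul_self_nonneg _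
  have hSnn : 0 ≤ s ⬝ᵥ s := Finset.sum_nonneg fun i _ => mul_self_nonneg _
  have hfin : w ⬝ᵥ w ≤ (Γ / γ * (Γ / γ)) * (s ⬝ᵥ s) := by
    have hk : 1 ≤ Γ / γ := (one_le_div hγ).2 hγΓ
    have h1 : γ * (w ⬝ᵥ w) ≤ Γ * (s ⬝ᵥ s) := by linarith
    have h2 : w ⬝ᵥ w ≤ (Γ / γ) * (s ⬝ᵥ s) := by
      rw [div_mul_eq_mul_div, le_div_iff₀ hγ]; nlinarith
    nlinarith
  calc Real.sqrt (w ⬝ᵥ w) ≤ Real.sqrt ((Γ / γ * (Γ / γ)) * (s ⬝ᵥ s)) :=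
        Real.sqrt_le_sqrt hfin
    _ = (Γ / γ) * Real.sqrt (s ⬝ᵥ s) := by
        have hk0 : 0 ≤ Γ / γ := div_nonneg (by linarith) hγ.le
        rw [Real.sqrt_mul (mul_nonneg hk0 hk0), Real.sqrt_mul_self hk0]
end

section
/- Let Q : ℝ^d → ℝ be convex and H = D + u·uᵀ be positive definite, where D is diagonal with positive entries. Then prox_Q^H(x) = D^{-1/2}·prox_{Q∘D^{-1/2}}(D^{1/2}x − v), where v = β₀·D^{-1/2}u and β₀ ∈ ℝ satisfies uᵀ(x − D^{-1/2} prox_{Q∘D^{-1/2}}(D^{1/2}(x − β₀D^{-1}u))) + β₀ = 0. -/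
open Matrix

/-- proximal splitting for H = D + uuᵀ (Lemma 1):
prox_Q^H(x) = D^{-1/2} prox_{Q∘D^{-1/2}}(D^{1/2}x − β₀ D^{-1/2}u) where β₀
solves the scalar equation. -/
theorem stmt10 {d : ℕ} (Q : (Fin d → ℝ) → ℝ) (hQ : ConvexOn ℝ Set.univ Q)
    (dv : Fin d → ℝ) (hdv : ∀ i, 0 < dv i) (u : Fin d → ℝ)
    (D : Matrix (Fin d) (Fin d) ℝ) (hD : D = Matrix.diagonal dv)
    (H : Matrix (Fin d) (Fin d) ℝ) (hH : H = D + vecMulVec u u)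
    (hpd : H.PosDef)
    (Dhalf Dhalfinv Dinv : Matrix (Fin d) (Fin d) ℝ)
    (hDhalf : Dhalf = Matrix.diagonal fun i => Real.sqrt (dv i))
    (hDhalfinv : Dhalfinv = Matrix.diagonal fun i => (Real.sqrt (dv i))⁻¹)
    (hDinv : Dinv = Matrix.diagonal fun i => (dv i)⁻¹)
    (x : Fin d → ℝ)
    -- p1 = prox_Q^H(x)
    (p1 : Fin d → ℝ)
    (hp1 : ∀ z, Q p1 + (1 / 2) * ((p1 - x) ⬝ᵥ (H *ᵥ (p1 - x)))
        ≤ Q z + (1 / 2) * ((z - x) ⬝ᵥ (H *ᵥ (z - x))))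
    -- p2 w = prox_{Q∘D^{-1/2}}(w)
    (p2 : (Fin d → ℝ) → (Fin d → ℝ))
    (hp2 : ∀ w z, Q (Dhalfinv *ᵥ p2 w) + (1 / 2) * ((p2 w - w) ⬝ᵥ (p2 w - w))
        ≤ Q (Dhalfinv *ᵥ z) + (1 / 2) * ((z - w) ⬝ᵥ (z - w)))
    (β₀ : ℝ)
    (hβ₀ : u ⬝ᵥ (x - Dhalfinv *ᵥ p2 (Dhalf *ᵥ (x - β₀ • (Dinv *ᵥ u)))) + β₀ = 0) :
    p1 = Dhalfinv *ᵥ p2 (Dhalf *ᵥ x - β₀ • (Dhalfinv *ᵥ u)) := by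
  have hsq : ∀ i, Real.sqrt (dv i) * Real.sqrt (dv i) = dv i :=
    fun i => Real.mul_self_sqrt (hdv i).le
  have hsne : ∀ i, Real.sqrt (dv i) ≠ 0 :=
    fun i => ne_of_gt (Real.sqrt_pos.2 (hdv i))
  set w : Fin d → ℝ := Dhalf *ᵥ x - β₀ • (Dhalfinv *ᵥ u) with hw
  set q : Fin d → ℝ := Dhalfinv *ᵥ p2 w with hqdef
  -- basic mulVec facts
  have hinvmul : ∀ z : Fin d → ℝ, Dhalfinv *ᵥ (Dhalf *ᵥ z) = z := by
    intro z; funext i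
    simp only [hDhalf, hDhalfinv, Matrix.mulVec_diagonal]
    field_simp
    exact mul_div_cancel_left₀ _ (hsne i)
  have hmulinv : Dhalf *ᵥ q = p2 w := by
    rw [hqdef]; funext i
    simp only [hDhalf, hDhalfinv, Matrix.mulVec_diagonal]
    field_simp
    exact mul_div_cancel_left₀ _ (hsne i)
  have harg : Dhalf *ᵥ (x - β₀ • (Dinv *ᵥ u)) = w := by
    rw [hw]; funext i
    simp only [hDhalf, hDhalfinv, hDinv, Matrix.mulVec_diagonal, Pi.sub_apply,
      Pi.smul_apply, smul_eq_mul, mul_sub]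
    have h1 := hsq i
    have h2 := hsne i
    have h3 : Real.sqrt (dv i) * (dv i)⁻¹ = (Real.sqrt (dv i))⁻¹ := by
      rw [show (dv i)⁻¹ = (Real.sqrt (dv i))⁻¹ * (Real.sqrt (dv i))⁻¹ by rw [← mul_inv, h1],
        ← mul_assoc, mul_inv_cancel₀ h2, one_mul]
    linear_combination (-(β₀ * u i)) * h3
  -- the quadratic form of H
  have hquad : ∀ v : Fin d → ℝ, v ⬝ᵥ (H *ᵥ v) = (∑ i, dv i * v i ^ 2) + (u ⬝ᵥ v) ^ 2 := by
    intro v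
    have h1 : vecMulVec u u *ᵥ v = (u ⬝ᵥ v) • u := by
      funext i
      simp only [Matrix.mulVec, Matrix.vecMulVec_apply, dotProduct, Pi.smul_apply, smul_eq_mul,
        Finset.sum_mul]
      exact Finset.sum_congr rfl fun j _ => by ring
    have h2 : v ⬝ᵥ (Matrix.diagonal dv *ᵥ v) = ∑ i, dv i * v i ^ 2 := by
      simp only [dotProduct, Matrix.mulVec_diagonal]
      exact Finset.sum_congr rfl fun i _ => by ring
    rw [hH, hD, Matrix.add_mulVec, dotProduct_add, h1, dotProduct_smul, h2,
      dotProduct_comm v u, smul_eq_mul]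
    ring
  have hquad' : ∀ z : Fin d → ℝ, (z - x) ⬝ᵥ (H *ᵥ (z - x))
      = (∑ i, dv i * (z i - x i) ^ 2) + (u ⬝ᵥ (z - x)) ^ 2 := by
    intro z
    rw [hquad]
    simp only [Pi.sub_apply]
  -- the norm of Dhalf z - w
  have hnorm : ∀ z : Fin d → ℝ, (Dhalf *ᵥ z - w) ⬝ᵥ (Dhalf *ᵥ z - w)
      = (∑ i, dv i * (z i - x i) ^ 2) + 2 * β₀ * (u ⬝ᵥ (z - x))
        + β₀ ^ 2 * (∑ i, (dv i)⁻¹ * u i ^ 2) := by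
    intro z
    simp only [hw, hDhalf, hDhalfinv, dotProduct, Matrix.mulVec_diagonal, Pi.sub_apply,
      Pi.smul_apply, smul_eq_mul, Finset.mul_sum, ← Finset.sum_add_distrib]
    refine Finset.sum_congr rfl fun i _ => ?_
    set a := dv i with ha
    set s := Real.sqrt a with hsdef
    have h1 : s * s = a := hsq i
    have h2 : s ≠ 0 := hsne i
    clear_value a s
    subst h1
    field_simp
    ring
  -- β₀ is the u-component of q - x
  have hqs : u ⬝ᵥ (q - x) = β₀ := by
    rw [harg, ← hqdef] at hβ₀
    simp only [dotProduct_sub] at hβ₀ ⊢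
    linarith
  -- F q ≤ F p1
  have key1 : Q q + (1 / 2) * ((q - x) ⬝ᵥ (H *ᵥ (q - x)))
      ≤ Q p1 + (1 / 2) * ((p1 - x) ⬝ᵥ (H *ᵥ (p1 - x))) := by
    have h2 := hp2 w (Dhalf *ᵥ p1)
    rw [hinvmul p1, ← hqdef, ← hmulinv, hnorm q, hnorm p1] at h2
    rw [hquad' q, hquad' p1, hqs]
    rw [hqs] at h2
    nlinarith [h2, sq_nonneg (u ⬝ᵥ (p1 - x) - β₀)]
  have key2 := hp1 q
  have heq : Q p1 + (1 / 2) * ((p1 - x) ⬝ᵥ (H *ᵥ (p1 - x)))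
      = Q q + (1 / 2) * ((q - x) ⬝ᵥ (H *ᵥ (q - x))) := le_antisymm key2 key1
  -- midpoint argument for uniqueness
  set m : Fin d → ℝ := (1 / 2 : ℝ) • p1 + (1 / 2 : ℝ) • q with hm
  have hQm : Q m ≤ (1 / 2) * Q p1 + (1 / 2) * Q q := by
    have := hQ.2 (Set.mem_univ p1) (Set.mem_univ q)
      (by norm_num : (0:ℝ) ≤ 1 / 2) (by norm_num : (0:ℝ) ≤ 1 / 2) (by norm_num)
    simpa [hm, smul_eq_mul] using this
  have hSpar : (∑ i, dv i * ((m - x) i) ^ 2)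
      = (1 / 2) * (∑ i, dv i * ((p1 - x) i) ^ 2) + (1 / 2) * (∑ i, dv i * ((q - x) i) ^ 2)
        - (1 / 4) * (∑ i, dv i * ((p1 - q) i) ^ 2) := by
    simp only [hm, Pi.sub_apply, Pi.add_apply, Pi.smul_apply, smul_eq_mul, Finset.mul_sum,
      ← Finset.sum_add_distrib, ← Finset.sum_sub_distrib]
    exact Finset.sum_congr rfl fun i _ => by ring
  have hupar : u ⬝ᵥ (m - x) = (1 / 2) * (u ⬝ᵥ (p1 - x)) + (1 / 2) * (u ⬝ᵥ (q - x)) := by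
    simp only [hm, dotProduct, Pi.sub_apply, Pi.add_apply, Pi.smul_apply, smul_eq_mul,
      Finset.mul_sum, ← Finset.sum_add_distrib]
    exact Finset.sum_congr rfl fun i _ => by ring
  have hudiff : u ⬝ᵥ (p1 - q) = (u ⬝ᵥ (p1 - x)) - (u ⬝ᵥ (q - x)) := by
    simp only [dotProduct_sub]; ring
  have hδ : (p1 - q) ⬝ᵥ (H *ᵥ (p1 - q)) ≤ 0 := by
    have hmid := hp1 m
    rw [hquad (m - x), hquad (p1 - x), hSpar, hupar] at hmid
    rw [hquad (p1 - x), hquad (q - x)] at heq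
    rw [hquad (p1 - q), hudiff]
    have hsq2 : ((1 / 2) * (u ⬝ᵥ (p1 - x)) + (1 / 2) * (u ⬝ᵥ (q - x))) ^ 2
        = (1 / 2) * (u ⬝ᵥ (p1 - x)) ^ 2 + (1 / 2) * (u ⬝ᵥ (q - x)) ^ 2
          - (1 / 4) * ((u ⬝ᵥ (p1 - x)) - (u ⬝ᵥ (q - x))) ^ 2 := by ring
    linarith [hmid, hQm, heq, hsq2]
  have hzero : p1 - q = 0 := by
    by_contra hne
    have hpos := hpd.dotProduct_mulVec_pos (x := p1 - q) hne
    simp only [star_trivial] at hpos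
    linarith
  have := sub_eq_zero.mp hzero
  rw [this]
end

section
/- Suppose F : ℝ^d → ℝ is differentiable with L-Lipschitz gradient and F + R =: P where R is convex. Let H be symmetric positive definite, x, v ∈ ℝ^d, η > 0, x⁺ = prox_{ηR}^H(x − ηH⁻¹v), g = (x − x⁺)/η, and Δ = v − ∇F(x). If F and R are convex, then for every y ∈ ℝ^d: P(y) ≥ P(x⁺) + gᵀH(y − x) + Δᵀ(x⁺ − y) + η‖g‖²_H − (Lη²/2)‖g‖². -/
open Matrix

lemma cs_dot {d : ℕ} (a b : Fin d → ℝ) :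
    a ⬝ᵥ b ≤ Real.sqrt (a ⬝ᵥ a) * Real.sqrt (b ⬝ᵥ b) := by
  simpa [dotProduct, sq] using Real.sum_mul_le_sqrt_mul_sqrt Finset.univ a b

lemma dot_nonneg {d : ℕ} (a : Fin d → ℝ) : 0 ≤ a ⬝ᵥ a :=
  Finset.sum_nonneg fun _ _ => mul_self_nonneg _

-- telescoping bound with n subdivision points
lemma range_sum_id_aux (n : ℕ) : ∑ k ∈ Finset.range n, ((k:ℝ)+1) = n * (n+1) / 2 := by
  induction n with
  | zero => simp
  | succ m ihm => rw [Finset.sum_range_succ, ihm]; push_cast; ring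

lemma descent_n {d : ℕ} (F : (Fin d → ℝ) → ℝ) (gF : (Fin d → ℝ) → (Fin d → ℝ)) (L : ℝ)
    (hL : 0 < L)
    (hFconv : ∀ a b, F a + gF a ⬝ᵥ (b - a) ≤ F b)
    (hLip : ∀ a b, Real.sqrt ((gF a - gF b) ⬝ᵥ (gF a - gF b)) ≤
        L * Real.sqrt ((a - b) ⬝ᵥ (a - b)))
    (x h : Fin d → ℝ) (n : ℕ) (hn : 0 < n) :
    F (x + h) ≤ F x + gF x ⬝ᵥ h + (L * (h ⬝ᵥ h)) * (n + 1) / (2 * n) := by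
  set s : ℕ → (Fin d → ℝ) := fun k => x + ((k : ℝ) / n) • h with hs
  have hnR : (0:ℝ) < n := by exact_mod_cast hn
  -- step inequality
  have step : ∀ k : ℕ, F (s (k+1)) ≤ F (s k) + gF (s (k+1)) ⬝ᵥ ((1/(n:ℝ)) • h) := by
    intro k
    have := hFconv (s (k+1)) (s k)
    have hdiff : s k - s (k+1) = -((1/(n:ℝ)) • h) := by
      funext i
      simp only [hs, Pi.sub_apply, Pi.add_apply, Pi.smul_apply, Pi.neg_apply,
        smul_eq_mul]
      push_cast
      ring
    have h2 : F (s (k+1)) + gF (s (k+1)) ⬝ᵥ (s k - s (k+1)) ≤ F (s k) := by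
      simpa using hFconv (s (k+1)) (s k)
    rw [hdiff] at h2
    simp only [dotProduct_neg] at h2
    linarith
  -- each increment bound
  have incr : ∀ k : ℕ, (k+1 : ℕ) ≤ n →
      gF (s (k+1)) ⬝ᵥ ((1/(n:ℝ)) • h) ≤
        gF x ⬝ᵥ h / n + L * (h ⬝ᵥ h) * (k+1) / (n^2) := by
    intro k hk
    have split : gF (s (k+1)) ⬝ᵥ ((1/(n:ℝ)) • h)
        = gF x ⬝ᵥ h / n + (1/(n:ℝ)) * ((gF (s (k+1)) - gF x) ⬝ᵥ h) := by
      simp [dotProduct_smul, sub_dotProduct]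
      ring
    have hdist : s (k+1) - x = (((k:ℝ)+1)/n) • h := by
      simp only [hs]; push_cast; module
    have hCS : (gF (s (k+1)) - gF x) ⬝ᵥ h ≤ L * (((k:ℝ)+1)/n) * (h ⬝ᵥ h) := by
      have c1 := cs_dot (gF (s (k+1)) - gF x) h
      have c2 := hLip (s (k+1)) x
      rw [hdist] at c2
      have hcnn : (0:ℝ) ≤ ((k:ℝ)+1)/n := by positivity
      have : Real.sqrt (((((k:ℝ)+1)/n) • h) ⬝ᵥ ((((k:ℝ)+1)/n) • h))
          = (((k:ℝ)+1)/n) * Real.sqrt (h ⬝ᵥ h) := by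
        rw [show ((((k:ℝ)+1)/n) • h) ⬝ᵥ ((((k:ℝ)+1)/n) • h)
            = (((k:ℝ)+1)/n)^2 * (h ⬝ᵥ h) by
          simp [smul_dotProduct, dotProduct_smul, sq]; ring]
        rw [Real.sqrt_mul (by positivity), Real.sqrt_sq hcnn]
      rw [this] at c2
      have hs1 : Real.sqrt ((gF (s (k+1)) - gF x) ⬝ᵥ (gF (s (k+1)) - gF x))
          ≤ L * ((((k:ℝ)+1)/n) * Real.sqrt (h ⬝ᵥ h)) := c2
      have hsq : Real.sqrt (h ⬝ᵥ h) * Real.sqrt (h ⬝ᵥ h) = h ⬝ᵥ h :=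
        Real.mul_self_sqrt (dot_nonneg h)
      calc (gF (s (k+1)) - gF x) ⬝ᵥ h
          ≤ Real.sqrt ((gF (s (k+1)) - gF x) ⬝ᵥ (gF (s (k+1)) - gF x)) * Real.sqrt (h ⬝ᵥ h) :=
            c1
        _ ≤ (L * ((((k:ℝ)+1)/n) * Real.sqrt (h ⬝ᵥ h))) * Real.sqrt (h ⬝ᵥ h) := by
            apply mul_le_mul_of_nonneg_right hs1 (Real.sqrt_nonneg _)
        _ = L * (((k:ℝ)+1)/n) * (h ⬝ᵥ h) := by rw [mul_assoc, mul_assoc, hsq]; ring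
    rw [split]
    have : (1/(n:ℝ)) * ((gF (s (k+1)) - gF x) ⬝ᵥ h) ≤ L * (h ⬝ᵥ h) * (k+1) / (n^2) := by
      have := mul_le_mul_of_nonneg_left hCS (by positivity : (0:ℝ) ≤ 1/(n:ℝ))
      calc (1/(n:ℝ)) * ((gF (s (k+1)) - gF x) ⬝ᵥ h)
          ≤ (1/(n:ℝ)) * (L * (((k:ℝ)+1)/n) * (h ⬝ᵥ h)) := this
        _ = L * (h ⬝ᵥ h) * (k+1) / (n^2) := by field_simp
    linarith
  -- telescoping
  have tele : ∀ m : ℕ, m ≤ n → F (s m) ≤ F x + ∑ k ∈ Finset.range m,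
      gF (s (k+1)) ⬝ᵥ ((1/(n:ℝ)) • h) := by
    intro m
    induction m with
    | zero => intro _; simp [hs]
    | succ m ih =>
      intro hm
      have := ih (Nat.le_of_succ_le hm)
      have := step m
      rw [Finset.sum_range_succ]
      linarith
  have hend : s n = x + h := by
    simp only [hs]; rw [div_self hnR.ne']; simp
  have main := tele n le_rfl
  rw [hend] at main
  have sumbound : ∑ k ∈ Finset.range n, gF (s (k+1)) ⬝ᵥ ((1/(n:ℝ)) • h)
      ≤ ∑ k ∈ Finset.range n, (gF x ⬝ᵥ h / n + L * (h ⬝ᵥ h) * (k+1) / (n^2)) := by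
    apply Finset.sum_le_sum
    intro k hk
    exact incr k (Nat.succ_le_of_lt (Finset.mem_range.mp hk))
  have sumval : ∑ k ∈ Finset.range n, (gF x ⬝ᵥ h / n + L * (h ⬝ᵥ h) * ((k:ℝ)+1) / (n^2))
      = gF x ⬝ᵥ h + (L * (h ⬝ᵥ h)) * (n + 1) / (2 * n) := by
    rw [Finset.sum_add_distrib, Finset.sum_const, Finset.card_range]
    have : ∑ k ∈ Finset.range n, L * (h ⬝ᵥ h) * ((k:ℝ)+1) / (n^2)
        = (L * (h ⬝ᵥ h) / (n^2)) * ∑ k ∈ Finset.range n, ((k:ℝ)+1) := by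
      rw [Finset.mul_sum]; congr 1; ext k; ring
    rw [this]
    rw [range_sum_id_aux n]
    field_simp
    rw [nsmul_eq_mul, show (n:ℝ) * (gF x ⬝ᵥ h / n) = gF x ⬝ᵥ h by field_simp]
    ring
  rw [sumval] at sumbound
  linarith

/-- descent lemma via limiting argument -/
lemma descent {d : ℕ} (F : (Fin d → ℝ) → ℝ) (gF : (Fin d → ℝ) → (Fin d → ℝ)) (L : ℝ)
    (hL : 0 < L)
    (hFconv : ∀ a b, F a + gF a ⬝ᵥ (b - a) ≤ F b)
    (hLip : ∀ a b, Real.sqrt ((gF a - gF b) ⬝ᵥ (gF a - gF b)) ≤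
        L * Real.sqrt ((a - b) ⬝ᵥ (a - b)))
    (x h : Fin d → ℝ) :
    F (x + h) ≤ F x + gF x ⬝ᵥ h + (L / 2) * (h ⬝ᵥ h) := by
  apply le_of_forall_pos_le_add
  intro ε hε
  obtain ⟨n, hn⟩ := exists_nat_gt (L * (h ⬝ᵥ h) / (2 * ε))
  have hhd : 0 ≤ h ⬝ᵥ h := dot_nonneg h
  have hnpos : 0 < n := by
    rcases Nat.eq_zero_or_pos n with h0 | h0
    · subst h0
      simp only [Nat.cast_zero] at hn
      have : 0 ≤ L * (h ⬝ᵥ h) / (2 * ε) := by positivity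
      linarith
    · exact h0
  have hb := descent_n F gF L hL hFconv hLip x h n hnpos
  have hnR : (0:ℝ) < n := by exact_mod_cast hnpos
  have hfrac : (L * (h ⬝ᵥ h)) * (n + 1) / (2 * n) ≤ (L / 2) * (h ⬝ᵥ h) + ε := by
    rw [div_le_iff₀ (by positivity)]
    have h1 : L * (h ⬝ᵥ h) < 2 * ε * n := by
      rw [div_lt_iff₀ (by positivity)] at hn
      linarith [hn]
    nlinarith
  linarith

/-- key inequality (Lemma 2) for the scaled proximal step. -/
theorem stmt11 {d : ℕ} (F R : (Fin d → ℝ) → ℝ) (L : ℝ) (hL : 0 < L)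
    (gF : (Fin d → ℝ) → (Fin d → ℝ))
    -- F convex with gradient gF
    (hFconv : ∀ a b, F a + gF a ⬝ᵥ (b - a) ≤ F b)
    -- gF is L-Lipschitz in the Euclidean norm
    (hLip : ∀ a b, Real.sqrt ((gF a - gF b) ⬝ᵥ (gF a - gF b)) ≤
        L * Real.sqrt ((a - b) ⬝ᵥ (a - b)))
    (hR : ConvexOn ℝ Set.univ R)
    (H : Matrix (Fin d) (Fin d) ℝ) (hsym : H.IsSymm) (hpd : H.PosDef)
    (η : ℝ) (hη : 0 < η) (x v : Fin d → ℝ)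
    -- xp = prox_{ηR}^H(x − ηH⁻¹v)
    (xp : Fin d → ℝ)
    (hxp : ∀ z, η * R xp + (1 / 2) *
          ((xp - (x - η • (H⁻¹ *ᵥ v))) ⬝ᵥ (H *ᵥ (xp - (x - η • (H⁻¹ *ᵥ v)))))
        ≤ η * R z + (1 / 2) *
          ((z - (x - η • (H⁻¹ *ᵥ v))) ⬝ᵥ (H *ᵥ (z - (x - η • (H⁻¹ *ᵥ v))))))
    (g Δ : Fin d → ℝ) (hg : g = η⁻¹ • (x - xp)) (hΔ : Δ = v - gF x) :
    ∀ y, F xp + R xp + g ⬝ᵥ (H *ᵥ (y - x)) + Δ ⬝ᵥ (xp - y)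
        + (η * (g ⬝ᵥ (H *ᵥ g)) - (L * η ^ 2 / 2) * (g ⬝ᵥ g))
      ≤ F y + R y := by
  intro y
  -- symmetry of the bilinear form
  have hsd : ∀ a b : Fin d → ℝ, a ⬝ᵥ (H *ᵥ b) = b ⬝ᵥ (H *ᵥ a) := by
    intro a b
    rw [Matrix.dotProduct_mulVec, ← Matrix.mulVec_transpose, hsym.eq,
      dotProduct_comm]
  have hxpx : x - xp = η • g := by
    rw [hg, smul_smul, mul_inv_cancel₀ hη.ne', one_smul]
  set u : Fin d → ℝ := x - η • (H⁻¹ *ᵥ v) with hu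
  have hHinv : H *ᵥ (H⁻¹ *ᵥ v) = v := by
    rw [Matrix.mulVec_mulVec,
      Matrix.mul_nonsing_inv _ (isUnit_iff_ne_zero.mpr hpd.det_pos.ne'),
      Matrix.one_mulVec]
  have key : H *ᵥ (xp - u) = η • v - η • (H *ᵥ g) := by
    have h1 : xp - u = η • (H⁻¹ *ᵥ v) - (x - xp) := by rw [hu]; module
    rw [h1, hxpx, Matrix.mulVec_sub, Matrix.mulVec_smul, Matrix.mulVec_smul, hHinv]
  set q0 : ℝ := (xp - u) ⬝ᵥ (H *ᵥ (xp - u)) with hq0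
  set q12 : ℝ := (y - xp) ⬝ᵥ (H *ᵥ (xp - u)) with hq12
  set q2 : ℝ := (y - xp) ⬝ᵥ (H *ᵥ (y - xp)) with hq2
  have hq2nn : 0 ≤ q2 := by
    rcases eq_or_ne (y - xp) 0 with h0 | h0
    · rw [hq2, h0]; simp
    · have := hpd.dotProduct_mulVec_pos h0
      rw [hq2]
      simp only [star_trivial] at this
      simpa using this.le
  -- expansion of the quadratic
  have qexp : ∀ t : ℝ, ((xp + t • (y - xp)) - u) ⬝ᵥ (H *ᵥ ((xp + t • (y - xp)) - u))
      = q0 + 2 * t * q12 + t ^ 2 * q2 := by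
    intro t
    have h1 : (xp + t • (y - xp)) - u = (xp - u) + t • (y - xp) := by module
    rw [h1, Matrix.mulVec_add, Matrix.mulVec_smul, add_dotProduct,
      dotProduct_add, dotProduct_add, smul_dotProduct,
      dotProduct_smul, dotProduct_smul, smul_dotProduct,
      hsd (xp - u) (y - xp)]
    simp only [smul_eq_mul, hq0, hq12, hq2]
    ring
  -- prox subgradient inequality with remainder
  have Rineq : ∀ t : ℝ, 0 < t → t ≤ 1 →
      η * (R xp - R y) ≤ q12 + t / 2 * q2 := by
    intro t ht ht1
    have hz : xp + t • (y - xp) = (1 - t) • xp + t • y := by module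
    have hRz : R (xp + t • (y - xp)) ≤ (1 - t) * R xp + t * R y := by
      rw [hz]
      simpa using hR.2 (Set.mem_univ xp) (Set.mem_univ y)
        (by linarith : (0:ℝ) ≤ 1 - t) ht.le (by ring)
    have h1 := hxp (xp + t • (y - xp))
    rw [qexp t] at h1
    have h2 : η * R (xp + t • (y - xp)) ≤ η * ((1 - t) * R xp + t * R y) :=
      mul_le_mul_of_nonneg_left hRz hη.le
    have h3 : t * (η * (R xp - R y)) ≤ t * (q12 + t / 2 * q2) := by nlinarith
    exact le_of_mul_le_mul_left h3 ht
  have Rsub : η * (R xp - R y) ≤ q12 := by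
    apply le_of_forall_pos_le_add
    intro ε hε
    have htq : 0 < ε * 2 / (q2 + 1) := by positivity
    set t : ℝ := min 1 (ε * 2 / (q2 + 1)) with htdef
    have htpos : 0 < t := lt_min one_pos htq
    have ht1 : t ≤ 1 := min_le_left _ _
    have := Rineq t htpos ht1
    have htle : t ≤ ε * 2 / (q2 + 1) := min_le_right _ _
    have hrem : t / 2 * q2 ≤ ε := by
      have h4 : t * (q2 + 1) ≤ ε * 2 :=
        calc t * (q2 + 1) ≤ (ε * 2 / (q2 + 1)) * (q2 + 1) :=
              mul_le_mul_of_nonneg_right htle (by positivity)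
          _ = ε * 2 := div_mul_cancel₀ _ (by positivity)
      nlinarith
    linarith
  -- rewrite q12
  have hq12v : q12 = η * ((y - xp) ⬝ᵥ v) - η * ((y - xp) ⬝ᵥ (H *ᵥ g)) := by
    rw [hq12, key, dotProduct_sub, dotProduct_smul,
      dotProduct_smul, smul_eq_mul, smul_eq_mul]
  have Rfin : R xp - R y ≤ (y - xp) ⬝ᵥ v - (y - xp) ⬝ᵥ (H *ᵥ g) := by
    have h5 : η * (R xp - R y) ≤ η * ((y - xp) ⬝ᵥ v - (y - xp) ⬝ᵥ (H *ᵥ g)) := by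
      rw [mul_sub]; linarith [Rsub, hq12v.le]
    exact le_of_mul_le_mul_left (by linarith [h5]) hη
  -- descent lemma at h = xp − x
  have hdes := descent F gF L hL hFconv hLip x (xp - x)
  rw [show x + (xp - x) = xp by abel] at hdes
  -- convexity at (x, y)
  have hconv := hFconv x y
  -- scalar identities
  have e1 : g ⬝ᵥ (H *ᵥ (y - x)) + η * (g ⬝ᵥ (H *ᵥ g)) = (y - xp) ⬝ᵥ (H *ᵥ g) := by
    have h6 : y - xp = (y - x) + η • g := by rw [← hxpx]; module
    rw [h6, add_dotProduct, smul_dotProduct, smul_eq_mul,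
      hsd g (y - x)]
  have e2 : Δ ⬝ᵥ (xp - y) = v ⬝ᵥ (xp - y) - gF x ⬝ᵥ (xp - y) := by
    rw [hΔ, sub_dotProduct]
  have e3 : (y - xp) ⬝ᵥ v = -(v ⬝ᵥ (xp - y)) := by
    rw [dotProduct_comm, show xp - y = -(y - xp) by module,
      dotProduct_neg, neg_neg]
  have e4 : gF x ⬝ᵥ (xp - y) = gF x ⬝ᵥ (xp - x) - gF x ⬝ᵥ (y - x) := by
    rw [← dotProduct_sub, show xp - x - (y - x) = xp - y by module]
  have e5 : (xp - x) ⬝ᵥ (xp - x) = η ^ 2 * (g ⬝ᵥ g) := by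
    rw [show xp - x = -(η • g) by rw [← hxpx]; module, neg_dotProduct,
      dotProduct_neg, neg_neg, smul_dotProduct,
      dotProduct_smul, smul_eq_mul, smul_eq_mul, sq]
    ring
  have e5' : L / 2 * ((xp - x) ⬝ᵥ (xp - x)) = L * η ^ 2 / 2 * (g ⬝ᵥ g) := by
    rw [e5]; ring
  linarith [Rfin, hdes, hconv, e1, e2, e3, e4, e5']
end
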